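/- arXiv:1211.1465 — 5 statements merged into one kernel-verified Lean document; each statement's English description precedes it below -/
import Mathlib

section
/- Let μ₁, μ₂ be finite Borel measures on [0,1]. If ∫_{[0,1]} x/((1-t)x + t) dμ₁(t) = ∫_{[0,1]} x/((1-t)x + t) dμ₂(t) for all x > 0, then μ₁ = μ₂. -/
open MeasureTheory
open scoped ENNReal NNReal

noncomputable abbrev XI := Set.Icc (0:ℝ) 1

/-- Coefficient extraction: a bounded sequence whose power series vanishes on (0,1/2) is zero. -/
lemma coeff_zero (c : ℕ → ℝ) (C : ℝ) (hb : ∀ n, |c n| ≤ C)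
    (h : ∀ u : ℝ, u ∈ Set.Ioo (0:ℝ) (1/2) → ∑' n, c n * u ^ n = 0) : ∀ n, c n = 0 := by
  have hC : 0 ≤ C := le_trans (abs_nonneg _) (hb 0)
  intro n
  induction n using Nat.strong_induction_on with
  | _ n ih =>
  have key : ∀ u : ℝ, u ∈ Set.Ioo (0:ℝ) (1/2) → |c n| ≤ 2 * C * u := by
    intro u hu
    obtain ⟨hu0, hu2⟩ := hu
    have hu1 : u < 1 := by linarith
    have hsummg : Summable (fun k : ℕ => C * u ^ k) :=
      (summable_geometric_of_lt_one hu0.le hu1).mul_left C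
    have hsum : ∀ m : ℕ, Summable (fun k : ℕ => c (k + m) * u ^ k) := by
      intro m
      apply Summable.of_norm
      apply Summable.of_nonneg_of_le (fun k => norm_nonneg _) _ hsummg
      intro k
      rw [Real.norm_eq_abs, abs_mul, abs_pow, abs_of_nonneg hu0.le]
      exact mul_le_mul_of_nonneg_right (hb _) (pow_nonneg hu0.le _)
    have hsum0 : Summable (fun k : ℕ => c k * u ^ k) := by simpa using hsum 0
    have h0 := h u ⟨hu0, hu2⟩
    have hsplit := Summable.sum_add_tsum_nat_add n hsum0
    rw [h0] at hsplit
    have hz : ∀ i ∈ Finset.range n, c i * u ^ i = 0 := by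
      intro i hi; rw [ih i (Finset.mem_range.mp hi)]; ring
    rw [Finset.sum_eq_zero hz] at hsplit
    have htail : ∑' k : ℕ, c (k + n) * u ^ k * u ^ n = 0 := by
      have := hsplit
      rw [zero_add] at this
      simpa [pow_add, mul_assoc] using this
    rw [tsum_mul_right] at htail
    have hun : (u:ℝ) ^ n ≠ 0 := pow_ne_zero _ hu0.ne'
    have hT : ∑' k : ℕ, c (k + n) * u ^ k = 0 := by
      rcases mul_eq_zero.mp htail with h' | h'
      · exact h'
      · exact absurd h' hun
    have hsplit1 := Summable.sum_add_tsum_nat_add 1 (hsum n)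
    rw [hT] at hsplit1
    simp only [Finset.range_one, Finset.sum_singleton, pow_zero, mul_one, zero_add] at hsplit1
    have hcn : c n = - ∑' k : ℕ, c (k + 1 + n) * u ^ (k + 1) := by linarith [hsplit1]
    have hsumtail : Summable (fun k : ℕ => c (k + 1 + n) * u ^ (k + 1)) := by
      apply Summable.of_norm
      apply Summable.of_nonneg_of_le (fun k => norm_nonneg _)
        (fun k => ?_) ((summable_geometric_of_lt_one hu0.le hu1).mul_left (C * u))
      rw [Real.norm_eq_abs, abs_mul, abs_pow, abs_of_nonneg hu0.le, pow_succ, mul_comm (u^k),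
        ← mul_assoc]
      exact mul_le_mul_of_nonneg_right
        (mul_le_mul_of_nonneg_right (hb _) hu0.le) (pow_nonneg hu0.le _)
    have hbound : |c n| ≤ ∑' k : ℕ, C * u * u ^ k := by
      rw [hcn, abs_neg]
      refine le_trans (norm_tsum_le_tsum_norm hsumtail.norm) ?_
      refine Summable.tsum_le_tsum (fun k => ?_) hsumtail.norm
        ((summable_geometric_of_lt_one hu0.le hu1).mul_left (C * u))
      rw [Real.norm_eq_abs, abs_mul, abs_pow, abs_of_nonneg hu0.le, pow_succ, mul_comm (u^k),
        ← mul_assoc]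
      exact mul_le_mul_of_nonneg_right
        (mul_le_mul_of_nonneg_right (hb _) hu0.le) (pow_nonneg hu0.le _)
    rw [tsum_mul_left, tsum_geometric_of_lt_one hu0.le hu1] at hbound
    have hinv : (1 - u)⁻¹ ≤ 2 := by
      rw [inv_le_comm₀ (by linarith) (by norm_num)]
      linarith
    calc |c n| ≤ C * u * (1 - u)⁻¹ := hbound
      _ ≤ C * u * 2 := by
          exact mul_le_mul_of_nonneg_left hinv (by positivity)
      _ = 2 * C * u := by ring
  have h0 : |c n| ≤ 0 := by
    refine le_of_forall_pos_le_add (fun ε hε => ?_)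
    have hu : min (1/4 : ℝ) (ε / (2 * C + 1)) ∈ Set.Ioo (0:ℝ) (1/2) := by
      constructor
      · exact lt_min (by norm_num) (by positivity)
      · exact lt_of_le_of_lt (min_le_left _ _) (by norm_num)
    calc |c n| ≤ 2 * C * min (1/4 : ℝ) (ε / (2 * C + 1)) := key _ hu
      _ ≤ 2 * C * (ε / (2 * C + 1)) := by
          exact mul_le_mul_of_nonneg_left (min_le_right _ _) (by positivity)
      _ ≤ ε := by
          rw [mul_div_assoc', div_le_iff₀ (by positivity)]
          nlinarith
      _ ≤ 0 + ε := by linarith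
  exact abs_eq_zero.mp (le_antisymm h0 (abs_nonneg _))

lemma integral_expand (μ : Measure XI) [IsFiniteMeasure μ]
    {u : ℝ} (hu : u ∈ Set.Ioo (0:ℝ) (1/2)) :
    ∫ t : XI, ((1:ℝ) + (t:ℝ) * u)⁻¹ ∂μ
      = ∑' n : ℕ, (-u) ^ n * ∫ t : XI, ((t:ℝ)) ^ n ∂μ := by
  obtain ⟨hu0, hu2⟩ := hu
  have hu1 : u < 1 := by linarith
  set f : ℕ → XI → ℝ := fun n t => (-u) ^ n * ((t:ℝ)) ^ n with hf
  have hmeas : ∀ n, AEStronglyMeasurable (f n) μ := fun n =>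
    (continuous_const.mul ((continuous_subtype_val.pow n))).aestronglyMeasurable
  have hnorm : ∀ n (a : XI), ‖f n a‖ ≤ u ^ n := by
    intro n a
    have ha0 : (0:ℝ) ≤ (a:ℝ) := a.2.1
    have ha1 : (a:ℝ) ≤ 1 := a.2.2
    rw [hf]
    simp only [norm_mul, norm_pow, norm_neg, Real.norm_eq_abs, abs_of_nonneg hu0.le,
      abs_of_nonneg ha0]
    calc u ^ n * (a:ℝ) ^ n ≤ u ^ n * 1 ^ n := by
          exact mul_le_mul_of_nonneg_left (pow_le_pow_left₀ ha0 ha1 n) (pow_nonneg hu0.le n)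
      _ = u ^ n := by ring
  have hfin : ∑' n : ℕ, ∫⁻ a, ‖f n a‖₊ ∂μ ≠ ∞ := by
    have hb : ∀ n : ℕ, ∫⁻ a, ‖f n a‖₊ ∂μ ≤ (ENNReal.ofReal u) ^ n * μ Set.univ := by
      intro n
      calc ∫⁻ a, (‖f n a‖₊ : ℝ≥0∞) ∂μ ≤ ∫⁻ _, ENNReal.ofReal (u ^ n) ∂μ := by
            refine lintegral_mono (fun a => ?_)
            rw [← enorm_eq_nnnorm, ← ofReal_norm]
            exact ENNReal.ofReal_le_ofReal (hnorm n a)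
        _ = ENNReal.ofReal (u ^ n) * μ Set.univ := lintegral_const _
        _ = (ENNReal.ofReal u) ^ n * μ Set.univ := by rw [ENNReal.ofReal_pow hu0.le]
    refine ne_top_of_le_ne_top ?_ (Summable.tsum_le_tsum hb ENNReal.summable ENNReal.summable)
    rw [ENNReal.tsum_mul_right, ENNReal.tsum_geometric]
    refine ENNReal.mul_ne_top (ENNReal.inv_ne_top.mpr ?_) (measure_ne_top μ _)
    rw [← ENNReal.ofReal_one, ne_eq, tsub_eq_zero_iff_le, ENNReal.ofReal_le_ofReal_iff hu0.le]
    · exact fun hcon => absurd hcon (by linarith)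
  have hpt : ∀ a : XI, ∑' n, f n a = ((1:ℝ) + (a:ℝ) * u)⁻¹ := by
    intro a
    have ha0 : (0:ℝ) ≤ (a:ℝ) := a.2.1
    have ha1 : (a:ℝ) ≤ 1 := a.2.2
    have hlt : ‖(-u) * (a:ℝ)‖ < 1 := by
      rw [norm_mul, Real.norm_eq_abs, Real.norm_eq_abs, abs_neg, abs_of_nonneg hu0.le,
        abs_of_nonneg ha0]
      nlinarith
    have := tsum_geometric_of_norm_lt_one hlt
    calc ∑' n, f n a = ∑' n, ((-u) * (a:ℝ)) ^ n := by
          refine tsum_congr (fun n => ?_); rw [hf, mul_pow]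
      _ = (1 - (-u) * (a:ℝ))⁻¹ := this
      _ = ((1:ℝ) + (a:ℝ) * u)⁻¹ := by ring_nf
  calc ∫ t : XI, ((1:ℝ) + (t:ℝ) * u)⁻¹ ∂μ
      = ∫ t : XI, ∑' n, f n t ∂μ := by
        refine integral_congr_ae (Filter.Eventually.of_forall (fun a => (hpt a).symm))
    _ = ∑' n, ∫ t : XI, f n t ∂μ := integral_tsum hmeas hfin
    _ = ∑' n : ℕ, (-u) ^ n * ∫ t : XI, ((t:ℝ)) ^ n ∂μ := by
        refine tsum_congr (fun n => ?_); rw [hf]; exact integral_const_mul _ _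

lemma integrable_cont (μ : Measure XI) [IsFiniteMeasure μ] (g : C(XI, ℝ)) :
    Integrable g μ := by
  have := (BoundedContinuousFunction.mkOfCompact g).integrable μ
  exact this

lemma mom_bound (μ : Measure XI) [IsFiniteMeasure μ] (n : ℕ) :
    |∫ t : XI, ((t:ℝ)) ^ n ∂μ| ≤ (μ Set.univ).toReal := by
  rw [← Real.norm_eq_abs]
  have : ∀ᵐ t : XI ∂μ, ‖((t:ℝ)) ^ n‖ ≤ 1 := by
    refine Filter.Eventually.of_forall (fun a => ?_)
    rw [norm_pow, Real.norm_eq_abs, abs_of_nonneg a.2.1]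
    exact pow_le_one₀ a.2.1 a.2.2
  simpa [Measure.real] using norm_integral_le_of_norm_le_const this

lemma cont_integral (μ : Measure XI) [IsFiniteMeasure μ] :
    Continuous (fun g : C(XI, ℝ) => ∫ t, g t ∂μ) := by
  refine LipschitzWith.continuous (K := (μ Set.univ).toReal.toNNReal)
    (LipschitzWith.of_dist_le_mul (fun f g => ?_))
  rw [dist_eq_norm, dist_eq_norm, ← integral_sub (integrable_cont μ f) (integrable_cont μ g)]
  have hb : ∀ᵐ t : XI ∂μ, ‖f t - g t‖ ≤ ‖f - g‖ := by
    refine Filter.Eventually.of_forall (fun a => ?_)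
    calc ‖f a - g a‖ = ‖(f - g) a‖ := by simp
      _ ≤ ‖f - g‖ := ContinuousMap.norm_coe_le_norm _ _
  calc ‖∫ t, (f t - g t) ∂μ‖ ≤ ‖f - g‖ * (μ Set.univ).toReal :=
        norm_integral_le_of_norm_le_const hb
    _ = ((μ Set.univ).toReal.toNNReal : ℝ) * ‖f - g‖ := by
        rw [Real.coe_toNNReal _ ENNReal.toReal_nonneg]; ring

theorem rep_function_injective
    (μ₁ μ₂ : Measure (Set.Icc (0:ℝ) 1)) [IsFiniteMeasure μ₁] [IsFiniteMeasure μ₂]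
    (h : ∀ x : ℝ, 0 < x →
      (∫ t : Set.Icc (0:ℝ) 1, x / ((1 - (t:ℝ)) * x + t) ∂μ₁) =
      ∫ t : Set.Icc (0:ℝ) 1, x / ((1 - (t:ℝ)) * x + t) ∂μ₂) :
    μ₁ = μ₂ := by
  -- Step 1: equality of Stieltjes-type integrals
  have h' : ∀ u : ℝ, u ∈ Set.Ioo (0:ℝ) (1/2) →
      (∫ t : XI, ((1:ℝ) + (t:ℝ) * u)⁻¹ ∂μ₁) = ∫ t : XI, ((1:ℝ) + (t:ℝ) * u)⁻¹ ∂μ₂ := by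
    intro u hu
    have hu0 := hu.1
    have hx : (0:ℝ) < (1 + u)⁻¹ := by positivity
    have hkey : ∀ t : XI, ((1 + u)⁻¹ : ℝ) / ((1 - (t:ℝ)) * (1 + u)⁻¹ + t)
        = ((1:ℝ) + (t:ℝ) * u)⁻¹ := by
      intro t
      have h1u : (1 + u) ≠ 0 := by positivity
      have h1tu : (1 + (t:ℝ) * u) ≠ 0 := by nlinarith [t.2.1, t.2.2]
      have hden : (1 - (t:ℝ)) * (1 + u)⁻¹ + t = (1 + u)⁻¹ * (1 + (t:ℝ) * u) := by
        field_simp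
        ring
      rw [hden, div_mul_cancel_left₀ (by positivity : ((1+u)⁻¹ : ℝ) ≠ 0)]
    have := h ((1 + u)⁻¹) hx
    calc ∫ t : XI, ((1:ℝ) + (t:ℝ) * u)⁻¹ ∂μ₁
        = ∫ t : XI, ((1 + u)⁻¹ : ℝ) / ((1 - (t:ℝ)) * (1 + u)⁻¹ + t) ∂μ₁ :=
          integral_congr_ae (Filter.Eventually.of_forall (fun t => (hkey t).symm))
      _ = ∫ t : XI, ((1 + u)⁻¹ : ℝ) / ((1 - (t:ℝ)) * (1 + u)⁻¹ + t) ∂μ₂ := this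
      _ = ∫ t : XI, ((1:ℝ) + (t:ℝ) * u)⁻¹ ∂μ₂ :=
          integral_congr_ae (Filter.Eventually.of_forall (fun t => hkey t))
  -- Step 2: all moments agree
  have hmom : ∀ n : ℕ, (∫ t : XI, ((t:ℝ)) ^ n ∂μ₁) = ∫ t : XI, ((t:ℝ)) ^ n ∂μ₂ := by
    set m₁ : ℕ → ℝ := fun n => ∫ t : XI, ((t:ℝ)) ^ n ∂μ₁ with hm₁
    set m₂ : ℕ → ℝ := fun n => ∫ t : XI, ((t:ℝ)) ^ n ∂μ₂ with hm₂
    set c : ℕ → ℝ := fun n => (-1) ^ n * (m₁ n - m₂ n) with hc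
    have hsummom : ∀ (m : ℕ → ℝ) (C : ℝ), (∀ n, |m n| ≤ C) →
        ∀ u ∈ Set.Ioo (0:ℝ) (1/2), Summable (fun n : ℕ => (-u) ^ n * m n) := by
      intro m C hmC u hu
      apply Summable.of_norm
      apply Summable.of_nonneg_of_le (fun k => norm_nonneg _)
        (fun k => ?_) ((summable_geometric_of_lt_one hu.1.le (by linarith [hu.2])).mul_left C)
      rw [Real.norm_eq_abs, abs_mul, abs_pow, abs_neg, abs_of_nonneg hu.1.le, mul_comm]
      exact mul_le_mul_of_nonneg_right (hmC _) (pow_nonneg hu.1.le _)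
    have hb₁ : ∀ n, |m₁ n| ≤ (μ₁ Set.univ).toReal := fun n => mom_bound μ₁ n
    have hb₂ : ∀ n, |m₂ n| ≤ (μ₂ Set.univ).toReal := fun n => mom_bound μ₂ n
    have hczero : ∀ n, c n = 0 := by
      apply coeff_zero c ((μ₁ Set.univ).toReal + (μ₂ Set.univ).toReal)
      · intro n
        rw [hc]
        calc |(-1:ℝ) ^ n * (m₁ n - m₂ n)| = |m₁ n - m₂ n| := by
              rw [abs_mul, abs_pow, abs_neg, abs_one, one_pow, one_mul]
          _ ≤ |m₁ n| + |m₂ n| := abs_sub _ _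
          _ ≤ (μ₁ Set.univ).toReal + (μ₂ Set.univ).toReal := add_le_add (hb₁ n) (hb₂ n)
      · intro u hu
        have hs₁ := hsummom m₁ _ hb₁ u hu
        have hs₂ := hsummom m₂ _ hb₂ u hu
        calc ∑' n : ℕ, c n * u ^ n
            = ∑' n : ℕ, ((-u) ^ n * m₁ n - (-u) ^ n * m₂ n) := by
              refine tsum_congr (fun n => ?_)
              rw [hc]
              have : (-u : ℝ) ^ n = (-1) ^ n * u ^ n := by rw [← neg_one_mul, mul_pow]
              rw [this]; ring
          _ = (∑' n : ℕ, (-u) ^ n * m₁ n) - ∑' n : ℕ, (-u) ^ n * m₂ n := Summable.tsum_sub hs₁ hs₂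
          _ = (∫ t : XI, ((1:ℝ) + (t:ℝ) * u)⁻¹ ∂μ₁) - ∫ t : XI, ((1:ℝ) + (t:ℝ) * u)⁻¹ ∂μ₂ := by
              rw [integral_expand μ₁ hu, integral_expand μ₂ hu]
          _ = 0 := by rw [h' u hu, sub_self]
    intro n
    have := hczero n
    rw [hc] at this
    rcases mul_eq_zero.mp this with h' | h'
    · exact absurd h' (pow_ne_zero _ (by norm_num))
    · linarith [sub_eq_zero.mp h']
  -- Step 3: integrals of polynomials agree
  have hpoly : ∀ g ∈ polynomialFunctions (Set.Icc (0:ℝ) 1),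
      (∫ t : XI, g t ∂μ₁) = ∫ t : XI, g t ∂μ₂ := by
    intro g hg
    rw [polynomialFunctions] at hg
    obtain ⟨p, -, rfl⟩ := hg
    have hint : ∀ (μ : Measure XI) [IsFiniteMeasure μ],
        (∫ t : XI, (p.toContinuousMapOn (Set.Icc (0:ℝ) 1)) t ∂μ)
          = ∑ i ∈ Finset.range (p.natDegree + 1), p.coeff i * ∫ t : XI, ((t:ℝ)) ^ i ∂μ := by
      intro μ _
      have heval : ∀ t : XI, (p.toContinuousMapOn (Set.Icc (0:ℝ) 1)) t
          = ∑ i ∈ Finset.range (p.natDegree + 1), p.coeff i * ((t:ℝ)) ^ i := by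
        intro t
        simp only [Polynomial.toContinuousMapOn_apply, Polynomial.toContinuousMap_apply]
        exact Polynomial.eval_eq_sum_range _
      rw [integral_congr_ae (Filter.Eventually.of_forall heval)]
      rw [integral_finset_sum]
      · exact Finset.sum_congr rfl (fun i _ => integral_const_mul _ _)
      · intro i _
        exact ((integrable_cont μ ⟨fun t : XI => ((t:ℝ)) ^ i,
          continuous_subtype_val.pow i⟩)).const_mul _
    show (∫ t : XI, (p.toContinuousMapOn (Set.Icc (0:ℝ) 1)) t ∂μ₁)
      = ∫ t : XI, (p.toContinuousMapOn (Set.Icc (0:ℝ) 1)) t ∂μ₂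
    rw [hint μ₁, hint μ₂]
    exact Finset.sum_congr rfl (fun i _ => by rw [hmom i])
  -- Step 4: integrals of all continuous functions agree
  have hcont : ∀ g : C(XI, ℝ), (∫ t : XI, g t ∂μ₁) = ∫ t : XI, g t ∂μ₂ := by
    intro g
    have hS : IsClosed {g : C(XI, ℝ) | (∫ t : XI, g t ∂μ₁) = ∫ t : XI, g t ∂μ₂} :=
      isClosed_eq (cont_integral μ₁) (cont_integral μ₂)
    have hmem : g ∈ closure ((polynomialFunctions (Set.Icc (0:ℝ) 1) : Set C(XI, ℝ))) := by
      have htop : g ∈ (polynomialFunctions (Set.Icc (0:ℝ) 1)).topologicalClosure := by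
        rw [polynomialFunctions_closure_eq_top]
        trivial
      rwa [← Subalgebra.topologicalClosure_coe]
    exact closure_minimal hpoly hS hmem
  -- Step 5: conclude
  apply ext_of_forall_lintegral_eq_of_IsFiniteMeasure
  intro f
  have hg := hcont ⟨fun x => ((f x : ℝ≥0) : ℝ), NNReal.continuous_coe.comp f.continuous⟩
  have e₁ := BoundedContinuousFunction.toReal_lintegral_coe_eq_integral f μ₁
  have e₂ := BoundedContinuousFunction.toReal_lintegral_coe_eq_integral f μ₂
  have fin₁ := BoundedContinuousFunction.lintegral_lt_top_of_nnreal μ₁ f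
  have fin₂ := BoundedContinuousFunction.lintegral_lt_top_of_nnreal μ₂ f
  have : (∫⁻ x, (f x : ℝ≥0∞) ∂μ₁).toReal = (∫⁻ x, (f x : ℝ≥0∞) ∂μ₂).toReal := by
    rw [e₁, e₂]
    exact hg
  exact (ENNReal.toReal_eq_toReal_iff' fin₁.ne fin₂.ne).mp this
end

section
/- For 0 < α < 1 and x > 0, x^α = (sin(απ)/π) · ∫_0^1 (x/((1-t)x + t)) · t^{α-1}(1-t)^{-α} dt. That is, the associated measure of the α-weighted geometric mean has density (sin(απ)/π) · t^{α-1}(1-t)^{-α} with respect to Lebesgue measure on (0,1). -/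
open Real

lemma realBetaRefl (α : ℝ) (hα : α ∈ Set.Ioo (0:ℝ) 1) :
    ∫ t in (0:ℝ)..1, t ^ (α - 1) * (1 - t) ^ (-α) = π / Real.sin (π * α) := by
  obtain ⟨h1, h2⟩ := hα
  have hre1 : 0 < ((α : ℂ)).re := by simpa using h1
  have hre2 : 0 < (((1 - α : ℝ) : ℂ)).re := by simpa using (by linarith : (0:ℝ) < 1 - α)
  have hB := Complex.Gamma_mul_Gamma_eq_betaIntegral hre1 hre2
  have hsum : (α : ℂ) + ((1 - α : ℝ) : ℂ) = 1 := by push_cast; ring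
  rw [hsum, Complex.Gamma_one, one_mul] at hB
  have key : Complex.betaIntegral (α : ℂ) ((1 - α : ℝ) : ℂ)
      = ((∫ t in (0:ℝ)..1, t ^ (α - 1) * (1 - t) ^ (-α) : ℝ) : ℂ) := by
    rw [Complex.betaIntegral, ← intervalIntegral.integral_ofReal]
    apply intervalIntegral.integral_congr
    intro t ht
    rw [Set.uIcc_of_le zero_le_one] at ht
    have ht0 : (0:ℝ) ≤ t := ht.1
    have ht1 : (0:ℝ) ≤ 1 - t := by linarith [ht.2]
    have e1 : ((α : ℂ)) - 1 = ((α - 1 : ℝ) : ℂ) := by push_cast; ring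
    have e2 : (((1 - α : ℝ) : ℂ)) - 1 = ((-α : ℝ) : ℂ) := by push_cast; ring
    have e3 : (1 : ℂ) - (t : ℂ) = ((1 - t : ℝ) : ℂ) := by push_cast; ring
    show (t:ℂ) ^ ((α:ℂ) - 1) * (1 - (t:ℂ)) ^ (((1 - α : ℝ):ℂ) - 1) = ((t ^ (α - 1) * (1 - t) ^ (-α) : ℝ) : ℂ)
    rw [e1, e2, e3, ← Complex.ofReal_cpow ht0, ← Complex.ofReal_cpow ht1]
    push_cast
    ring
  rw [key, Complex.Gamma_ofReal, Complex.Gamma_ofReal, ← Complex.ofReal_mul] at hB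
  have := Complex.ofReal_injective hB
  rw [← this, Real.Gamma_mul_Gamma_one_sub]

theorem weighted_geometric_mean_integral_rep (α : ℝ) (hα : α ∈ Set.Ioo (0:ℝ) 1)
    (x : ℝ) (hx : 0 < x) :
    x ^ α = Real.sin (α * π) / π *
      ∫ t in (0:ℝ)..1, (x / ((1 - t) * x + t)) * t ^ (α - 1) * (1 - t) ^ (-α) := by
  obtain ⟨hα0, hα1⟩ := hα
  set f : ℝ → ℝ := fun t => (x / ((1 - t) * x + t)) * t ^ (α - 1) * (1 - t) ^ (-α) with hf
  set D : ℝ → ℝ := fun s => x * s + 1 - s with hD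
  set φ : ℝ → ℝ := fun s => x * s / D s with hφ
  set ψ : ℝ → ℝ := fun t => t / ((1 - t) * x + t) with hψ
  have hDpos : ∀ s ∈ Set.Ioo (0:ℝ) 1, 0 < D s := by
    intro s hs
    have := mul_pos hx hs.1
    simp only [hD]
    nlinarith [hs.2]
  have hEpos : ∀ t ∈ Set.Ioo (0:ℝ) 1, 0 < (1 - t) * x + t := by
    intro t ht
    nlinarith [mul_pos (by linarith [ht.2] : (0:ℝ) < 1 - t) hx, ht.1]
  have hφmem : ∀ s ∈ Set.Ioo (0:ℝ) 1, φ s ∈ Set.Ioo (0:ℝ) 1 := by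
    intro s hs
    have hD' := hDpos s hs
    constructor
    · exact div_pos (mul_pos hx hs.1) hD'
    · rw [div_lt_one hD']
      simp only [hD]
      linarith [hs.2]
  have hlinv : ∀ s ∈ Set.Ioo (0:ℝ) 1, ψ (φ s) = s := by
    intro s hs
    have hD' := hDpos s hs
    have h1φ : 1 - φ s = (1 - s) / D s := by
      show 1 - x * s / D s = (1 - s) / D s
      rw [eq_div_iff hD'.ne', sub_mul, one_mul, div_mul_cancel₀ _ hD'.ne']
      simp only [hD]
      ring
    have hden : (1 - φ s) * x + φ s = x / D s := by
      rw [h1φ]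
      show (1 - s) / D s * x + x * s / D s = x / D s
      rw [div_mul_eq_mul_div, ← add_div]
      congr 1
      ring
    show φ s / ((1 - φ s) * x + φ s) = s
    rw [hden]
    show x * s / D s / (x / D s) = s
    rw [div_div_div_cancel_right₀ hD'.ne']
    exact mul_div_cancel_left₀ s hx.ne'
  have himg : φ '' Set.Ioo (0:ℝ) 1 = Set.Ioo (0:ℝ) 1 := by
    apply Set.Subset.antisymm
    · rintro t ⟨s, hs, rfl⟩; exact hφmem s hs
    · intro t ht
      have hE := hEpos t ht
      refine ⟨ψ t, ⟨div_pos ht.1 hE, ?_⟩, ?_⟩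
      · rw [hψ]
        simp only
        rw [div_lt_one hE]
        nlinarith [mul_pos (by linarith [ht.2] : (0:ℝ) < 1 - t) hx]
      · have hDψ : D (ψ t) = x / ((1 - t) * x + t) := by
          show x * (t / ((1 - t) * x + t)) + 1 - t / ((1 - t) * x + t) = x / ((1 - t) * x + t)
          rw [eq_div_iff hE.ne', sub_mul, add_mul, mul_assoc,
            div_mul_cancel₀ _ hE.ne']
          ring
        show x * ψ t / D (ψ t) = t
        rw [hDψ]
        show x * (t / ((1 - t) * x + t)) / (x / ((1 - t) * x + t)) = t
        rw [← mul_div_assoc, div_div_div_cancel_right₀ hE.ne']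
        exact mul_div_cancel_left₀ t hx.ne'
  have hinj : Set.InjOn φ (Set.Ioo (0:ℝ) 1) := by
    intro a ha b hb hab
    have := congrArg ψ hab
    rwa [hlinv a ha, hlinv b hb] at this
  have hderiv : ∀ s ∈ Set.Ioo (0:ℝ) 1,
      HasDerivWithinAt φ (x / (D s) ^ 2) (Set.Ioo (0:ℝ) 1) s := by
    intro s hs
    have hD' := (hDpos s hs).ne'
    have h1 : HasDerivAt (fun s : ℝ => x * s) x s := by
      simpa using (hasDerivAt_id s).const_mul x
    have h2 : HasDerivAt D (x - 1) s := by
      simp only [hD]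
      simpa using ((hasDerivAt_id s).const_mul x |>.add_const 1).fun_sub (hasDerivAt_id s)
    have h3 := h1.div h2 hD'
    have : (x * D s - x * s * (x - 1)) / D s ^ 2 = x / D s ^ 2 := by
      have : x * D s - x * s * (x - 1) = x := by simp only [hD]; ring
      rw [this]
    rw [this] at h3
    exact h3.hasDerivWithinAt
  have key := MeasureTheory.integral_image_eq_integral_abs_deriv_smul
    measurableSet_Ioo hderiv hinj f
  rw [himg] at key
  have hpt : ∀ s ∈ Set.Ioo (0:ℝ) 1,
      |x / D s ^ 2| • f (φ s) = x ^ α * (s ^ (α - 1) * (1 - s) ^ (-α)) := by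
    intro s hs
    have hD' := hDpos s hs
    have hs0 := hs.1
    have hs1 : (0:ℝ) < 1 - s := by linarith [hs.2]
    have h1φ : 1 - φ s = (1 - s) / D s := by
      simp only [hφ, hD]
      have hD'' : x * s + 1 - s ≠ 0 := hD'.ne'
      field_simp
      ring
    have hφv : φ s = x * s / D s := rfl
    have hden : (1 - φ s) * x + φ s = x / D s := by
      rw [h1φ, hφv]
      field_simp
      ring
    have e1 : x / ((1 - φ s) * x + φ s) = D s := by
      rw [hden]
      field_simp
    have e2 : (φ s) ^ (α - 1) = x ^ (α - 1) * s ^ (α - 1) / D s ^ (α - 1) := by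
      rw [hφv, Real.div_rpow (by positivity) hD'.le, Real.mul_rpow hx.le hs0.le]
    have e3 : (1 - φ s) ^ (-α) = (1 - s) ^ (-α) / D s ^ (-α) := by
      rw [h1φ, Real.div_rpow hs1.le hD'.le]
    rw [smul_eq_mul, abs_of_pos (div_pos hx (pow_pos hD' 2)), hf]
    simp only
    rw [e1, e2, e3]
    have hx1 : x ^ (α - 1) = x ^ α / x := by
      rw [Real.rpow_sub hx, Real.rpow_one]
    have hD1 : D s ^ (α - 1) = D s ^ α / D s := by
      rw [Real.rpow_sub hD', Real.rpow_one]
    have hD2 : D s ^ (-α) = (D s ^ α)⁻¹ := by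
      rw [Real.rpow_neg hD'.le]
    rw [hx1, hD1, hD2]
    have hDα : (0:ℝ) < D s ^ α := Real.rpow_pos_of_pos hD' α
    field_simp
  have hcong : ∫ s in Set.Ioo (0:ℝ) 1, |x / D s ^ 2| • f (φ s)
      = ∫ s in Set.Ioo (0:ℝ) 1, x ^ α * (s ^ (α - 1) * (1 - s) ^ (-α)) := by
    apply MeasureTheory.setIntegral_congr_fun measurableSet_Ioo
    intro s hs
    exact hpt s hs
  have hbeta := realBetaRefl α ⟨hα0, hα1⟩
  have hIval : ∫ t in (0:ℝ)..1, f t = x ^ α * (π / Real.sin (π * α)) := by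
    rw [intervalIntegral.integral_of_le zero_le_one,
      MeasureTheory.integral_Ioc_eq_integral_Ioo, key, hcong,
      MeasureTheory.integral_const_mul]
    congr 1
    rw [← hbeta, intervalIntegral.integral_of_le zero_le_one,
      MeasureTheory.integral_Ioc_eq_integral_Ioo]
  have hsin : 0 < Real.sin (α * π) := by
    apply Real.sin_pos_of_pos_of_lt_pi
    · positivity
    · nlinarith [Real.pi_pos]
  rw [show (∫ t in (0:ℝ)..1, (x / ((1 - t) * x + t)) * t ^ (α - 1) * (1 - t) ^ (-α)) = ∫ t in (0:ℝ)..1, f t from rfl, hIval]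
  rw [mul_comm π α] at *
  field_simp
end

section
/- For x > 0, (x-1)/log x = ∫_0^1 (x/((1-t)x+t)) · g(t) dt, where g(t) = 1/( t(1-t)(π² + (log(t/(1-t)))²) ). (Left side interpreted as 1 when x = 1.) -/
open Real MeasureTheory


lemma int_exp_sin (a : ℝ) :
    ∫ u in (0:ℝ)..1, Real.exp (a*u) * Real.sin (π*u)
      = π * (Real.exp a + 1) / (a^2 + π^2) := by
  have hD : a^2 + π^2 ≠ 0 := by positivity
  have key : ∀ u ∈ Set.uIcc (0:ℝ) 1,
      HasDerivAt (fun u => Real.exp (a*u) * (a * Real.sin (π*u) - π * Real.cos (π*u)) / (a^2+π^2))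
        (Real.exp (a*u) * Real.sin (π*u)) u := by
    intro u _
    have h1 : HasDerivAt (fun u : ℝ => Real.exp (a*u)) (Real.exp (a*u) * a) u := by
      simpa using ((hasDerivAt_id u).const_mul a).exp
    have h2 : HasDerivAt (fun u : ℝ => Real.sin (π*u)) (Real.cos (π*u) * π) u := by
      simpa using ((hasDerivAt_id u).const_mul π).sin
    have h3 : HasDerivAt (fun u : ℝ => Real.cos (π*u)) (-Real.sin (π*u) * π) u := by
      simpa using ((hasDerivAt_id u).const_mul π).cos
    have h4 := (h1.mul ((h2.const_mul a).sub (h3.const_mul π))).div_const (a^2+π^2)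
    refine h4.congr_deriv ?_
    rw [div_eq_iff hD]
    simp only [Pi.sub_apply]
    ring
  rw [intervalIntegral.integral_eq_sub_of_hasDerivAt key ((Continuous.mul (by fun_prop) (by fun_prop)).intervalIntegrable _ _)]
  simp [Real.sin_pi, Real.cos_pi]
  field_simp
  ring


lemma beta_complex_eq {u : ℝ} (h0 : 0 < u) (h1 : u < 1) :
    Complex.betaIntegral u (1 - u) = ((π / Real.sin (π * u) : ℝ) : ℂ) := by
  have hre : (0:ℝ) < (u:ℂ).re := by simpa using h0
  have hre2 : (0:ℝ) < ((1:ℂ) - u).re := by simp; linarith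
  have h := Complex.Gamma_mul_Gamma_eq_betaIntegral hre hre2
  rw [show (u:ℂ) + (1 - u) = 1 by ring, Complex.Gamma_one, one_mul] at h
  rw [← h, Complex.Gamma_mul_Gamma_one_sub]
  rw [Complex.ofReal_div, Complex.ofReal_sin]
  push_cast
  ring_nf

lemma beta_interval_eq {u : ℝ} (h0 : 0 < u) (h1 : u < 1) :
    ∫ t in (0:ℝ)..1, t^(u-1) * (1-t)^(-u) = π / Real.sin (π * u) := by
  have key : Complex.betaIntegral u (1 - u)
      = ((∫ t in (0:ℝ)..1, t^(u-1) * (1-t)^(-u) : ℝ) : ℂ) := by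
    rw [Complex.betaIntegral, ← intervalIntegral.integral_ofReal]
    apply intervalIntegral.integral_congr
    intro t ht
    rw [Set.uIcc_of_le (by norm_num : (0:ℝ) ≤ 1)] at ht
    obtain ⟨ht0, ht1⟩ := ht
    have e1 : ((t:ℂ)) ^ ((u:ℂ) - 1) = ((t ^ (u-1) : ℝ) : ℂ) := by
      rw [Complex.ofReal_cpow ht0]; push_cast; ring_nf
    have e2 : ((1:ℂ) - t) ^ ((1:ℂ) - u - 1) = (((1-t) ^ (-u) : ℝ) : ℂ) := by
      rw [Complex.ofReal_cpow (by linarith)]; push_cast; ring_nf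
    simp only [e1, e2]; push_cast; ring
  have := (beta_complex_eq h0 h1).symm.trans key
  exact_mod_cast this.symm

lemma beta_integrableOn {u : ℝ} (h0 : 0 < u) (h1 : u < 1) :
    IntegrableOn (fun t : ℝ => t^(u-1) * (1-t)^(-u)) (Set.Ioo 0 1) := by
  have hc : IntervalIntegrable (fun t : ℝ => ‖(t:ℂ) ^ ((u:ℂ) - 1) * (1 - (t:ℂ)) ^ ((1:ℂ) - u - 1)‖) volume 0 1 := by
    refine (Complex.betaIntegral_convergent (by simpa using h0) ?_).norm
    simp; linarith
  have hIoc : IntegrableOn (fun t : ℝ => ‖(t:ℂ) ^ ((u:ℂ) - 1) * (1 - (t:ℂ)) ^ ((1:ℂ) - u - 1)‖) (Set.Ioc 0 1) :=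
    (intervalIntegrable_iff_integrableOn_Ioc_of_le (by norm_num)).mp hc
  refine (hIoc.mono_set Set.Ioo_subset_Ioc_self).congr_fun ?_ measurableSet_Ioo
  intro t ht
  obtain ⟨ht0, ht1⟩ := ht
  simp only [norm_mul,
    Complex.norm_cpow_eq_rpow_re_of_pos ht0,
    show ((1:ℂ) - t) = ((1 - t : ℝ) : ℂ) by push_cast; ring,
    Complex.norm_cpow_eq_rpow_re_of_pos (show (0:ℝ) < 1 - t by linarith)]
  simp

lemma beta_Ioo_eq {u : ℝ} (h0 : 0 < u) (h1 : u < 1) :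
    ∫ t in Set.Ioo (0:ℝ) 1, t^(u-1) * (1-t)^(-u) = π / Real.sin (π * u) := by
  rw [← MeasureTheory.integral_Ioc_eq_integral_Ioo,
    ← intervalIntegral.integral_of_le (by norm_num : (0:ℝ) ≤ 1)]
  exact beta_interval_eq h0 h1


lemma phi_den_pos {x : ℝ} (hx : 0 < x) {r : ℝ} (h0 : 0 ≤ r) (h1 : r ≤ 1) :
    0 < 1 + (x-1)*r := by
  rcases h0.eq_or_lt with h|h
  · rw [← h]; norm_num
  · nlinarith [mul_pos hx h]

lemma phi_image {x : ℝ} (hx : 0 < x) :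
    (fun r => x*r/(1+(x-1)*r)) '' Set.Ioo (0:ℝ) 1 = Set.Ioo (0:ℝ) 1 := by
  ext t
  constructor
  · rintro ⟨r, ⟨hr0, hr1⟩, rfl⟩
    have hD := phi_den_pos hx hr0.le hr1.le
    constructor
    · positivity
    · rw [div_lt_one hD]; nlinarith
  · rintro ⟨ht0, ht1⟩
    have h : 0 < x*(1-t)+t := by nlinarith
    refine ⟨t/(x*(1-t)+t), ⟨by positivity, ?_⟩, ?_⟩
    · rw [div_lt_one h]; nlinarith
    · have hD : 1 + (x-1)*(t/(x*(1-t)+t)) = x/(x*(1-t)+t) := by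
        field_simp; ring
      simp only [hD]
      field_simp
lemma phi_injOn {x : ℝ} (hx : 0 < x) :
    Set.InjOn (fun r => x*r/(1+(x-1)*r)) (Set.Ioo (0:ℝ) 1) := by
  rintro r ⟨hr0, hr1⟩ s ⟨hs0, hs1⟩ h
  have hDr := phi_den_pos hx hr0.le hr1.le
  have hDs := phi_den_pos hx hs0.le hs1.le
  simp only at h
  rw [div_eq_div_iff (by linarith) (by linarith)] at h
  nlinarith [mul_pos hx (sub_pos.mpr hr1)]

lemma phi_hasDeriv {x : ℝ} (hx : 0 < x) {r : ℝ} (h0 : 0 < r) (h1 : r < 1) :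
    HasDerivAt (fun r => x*r/(1+(x-1)*r)) (x/(1+(x-1)*r)^2) r := by
  have hD := phi_den_pos hx h0.le h1.le
  have h := ((hasDerivAt_id r).const_mul x).div
    (((hasDerivAt_id r).const_mul (x-1)).const_add 1) (by simpa using hD.ne')
  refine h.congr_deriv ?_
  congr 1 <;> simp only [id_eq] <;> ring

lemma pointwise_subst {x : ℝ} (hx : 0 < x) {u : ℝ} {r : ℝ} (hr0 : 0 < r) (hr1 : r < 1) :
    |x/(1+(x-1)*r)^2| • (x/((1 - x*r/(1+(x-1)*r))*x + x*r/(1+(x-1)*r)) *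
        ((x*r/(1+(x-1)*r))^(u-1) * (1 - x*r/(1+(x-1)*r))^(-u)))
      = x^u * (r^(u-1) * (1-r)^(-u)) := by
  have hD := phi_den_pos hx hr0.le hr1.le
  set D := 1 + (x-1)*r with hDdef
  have h1mt : 1 - x*r/D = (1-r)/D := by field_simp; ring
  have hden : (1 - x*r/D)*x + x*r/D = x/D := by field_simp; ring
  rw [hden, h1mt]
  have e1 : (x*r/D)^(u-1) = x^(u-1) * r^(u-1) * D^(1-u) := by
    rw [Real.div_rpow (by positivity) hD.le, Real.mul_rpow hx.le hr0.le,
      show (1-u) = -(u-1) by ring, Real.rpow_neg hD.le, div_eq_mul_inv]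
  have e2 : ((1-r)/D)^(-u) = (1-r)^(-u) * D^u := by
    rw [Real.div_rpow (by linarith) hD.le, Real.rpow_neg hD.le u, div_eq_mul_inv, inv_inv]
  rw [e1, e2, smul_eq_mul, abs_of_pos (by positivity)]
  have hpow : D^(1-u) * D^u = D := by
    rw [← Real.rpow_add hD]; norm_num
  have hxu : x * x^(u-1) = x^u := by
    nth_rewrite 1 [← Real.rpow_one x]
    rw [← Real.rpow_add hx]; norm_num
  have hxD : x/(x/D) = D := by
    field_simp
  rw [hxD]
  calc x/D^2 * (D * (x^(u-1) * r^(u-1) * D^(1-u) * ((1-r)^(-u) * D^u)))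
      = (x * x^(u-1)) * (r^(u-1) * (1-r)^(-u)) * (D^(1-u) * D^u) * (D / D^2) := by ring
    _ = x^u * (r^(u-1) * (1-r)^(-u)) := by
        rw [hpow, hxu]; field_simp

lemma subst_integral {x u : ℝ} (hx : 0 < x) (h0 : 0 < u) (h1 : u < 1) :
    ∫ t in Set.Ioo (0:ℝ) 1, x/((1-t)*x+t) * (t^(u-1) * (1-t)^(-u))
      = x^u * (π / Real.sin (π * u)) := by
  have key := MeasureTheory.integral_image_eq_integral_abs_deriv_smul measurableSet_Ioo
    (f := fun r => x*r/(1+(x-1)*r)) (f' := fun r => x/(1+(x-1)*r)^2)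
    (fun r hr => (phi_hasDeriv hx hr.1 hr.2).hasDerivWithinAt)
    (phi_injOn hx)
    (fun t => x/((1-t)*x+t) * (t^(u-1) * (1-t)^(-u)))
  rw [phi_image hx] at key
  rw [key, MeasureTheory.setIntegral_congr_fun measurableSet_Ioo
      (fun r hr => pointwise_subst hx hr.1 hr.2)]
  rw [MeasureTheory.integral_const_mul, beta_Ioo_eq h0 h1]

lemma subst_integrableOn {x u : ℝ} (hx : 0 < x) (h0 : 0 < u) (h1 : u < 1) :
    IntegrableOn (fun t => x/((1-t)*x+t) * (t^(u-1) * (1-t)^(-u))) (Set.Ioo (0:ℝ) 1) := by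
  have key := MeasureTheory.integrableOn_image_iff_integrableOn_abs_deriv_smul measurableSet_Ioo
    (f := fun r => x*r/(1+(x-1)*r)) (f' := fun r => x/(1+(x-1)*r)^2)
    (fun r hr => (phi_hasDeriv hx hr.1 hr.2).hasDerivWithinAt)
    (phi_injOn hx)
    (fun t => x/((1-t)*x+t) * (t^(u-1) * (1-t)^(-u)))
  rw [phi_image hx] at key
  rw [key]
  have hbeta : IntegrableOn (fun r : ℝ => x^u * (r^(u-1) * (1-r)^(-u))) (Set.Ioo (0:ℝ) 1) :=
    (beta_integrableOn h0 h1).const_mul _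
  exact hbeta.congr_fun (fun r hr => (pointwise_subst hx hr.1 hr.2).symm) measurableSet_Ioo

lemma int_rpow_Ioo {x : ℝ} (hx : 0 < x) :
    ∫ u in Set.Ioo (0:ℝ) 1, x^u = if x = 1 then (1:ℝ) else (x-1)/Real.log x := by
  rw [← MeasureTheory.integral_Ioc_eq_integral_Ioo, ← intervalIntegral.integral_of_le zero_le_one]
  by_cases h : x = 1
  · simp [h]
  · rw [if_neg h]
    have hlog : Real.log x ≠ 0 := by
      rw [Ne, Real.log_eq_zero]
      push_neg
      exact ⟨hx.ne', h, by linarith⟩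
    have key : ∀ u ∈ Set.uIcc (0:ℝ) 1,
        HasDerivAt (fun u => Real.exp (Real.log x * u) / Real.log x) (x ^ u) u := by
      intro u _
      have h1 : HasDerivAt (fun u : ℝ => Real.exp (Real.log x * u))
          (Real.exp (Real.log x * u) * Real.log x) u := by
        simpa using ((hasDerivAt_id u).const_mul (Real.log x)).exp
      have h2 := h1.div_const (Real.log x)
      rw [mul_div_assoc, div_self hlog, mul_one] at h2
      rw [Real.rpow_def_of_pos hx]
      exact h2
    have hint : IntervalIntegrable (fun u : ℝ => x ^ u) volume 0 1 := by
      apply Continuous.intervalIntegrable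
      have : (fun u : ℝ => x ^ u) = fun u => Real.exp (Real.log x * u) :=
        funext fun u => Real.rpow_def_of_pos hx u
      rw [this]; fun_prop
    rw [intervalIntegral.integral_eq_sub_of_hasDerivAt key hint]
    rw [mul_one, mul_zero, Real.exp_zero, Real.exp_log hx, div_sub_div_same]

lemma inner_u {x t : ℝ} (hx : 0 < x) (ht0 : 0 < t) (ht1 : t < 1) :
    ∫ u in Set.Ioo (0:ℝ) 1, Real.sin (π*u)/π * (x/((1-t)*x+t) * (t^(u-1) * (1-t)^(-u)))
      = x/((1-t)*x+t) * (1/(t*(1-t)*(π^2 + (Real.log (t/(1-t)))^2))) := by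
  have h1t : (0:ℝ) < 1 - t := by linarith
  have hs : 0 < t/(1-t) := div_pos ht0 h1t
  set c := Real.log (t/(1-t)) with hc
  have hrw : ∀ u : ℝ, t^(u-1) * (1-t)^(-u) = (1/t) * Real.exp (c * u) := by
    intro u
    rw [hc, ← Real.rpow_def_of_pos hs, Real.div_rpow ht0.le h1t.le, Real.rpow_sub ht0,
      Real.rpow_one, Real.rpow_neg h1t.le]
    field_simp
  have step1 : ∫ u in Set.Ioo (0:ℝ) 1, Real.sin (π*u)/π * (x/((1-t)*x+t) * (t^(u-1) * (1-t)^(-u)))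
      = ∫ u in Set.Ioo (0:ℝ) 1, (x/((1-t)*x+t) * (1/t) * (1/π)) * (Real.exp (c*u) * Real.sin (π*u)) :=
    MeasureTheory.setIntegral_congr_fun measurableSet_Ioo (fun u _ => by rw [hrw u]; ring)
  rw [step1, MeasureTheory.integral_const_mul, ← MeasureTheory.integral_Ioc_eq_integral_Ioo,
    ← intervalIntegral.integral_of_le zero_le_one, int_exp_sin c]
  have hec : Real.exp c = t/(1-t) := Real.exp_log hs
  have hc2 : c^2 + π^2 ≠ 0 := by positivity
  rw [hec]
  have hkey : t/(1-t) + 1 = 1/(1-t) := by field_simp; ring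
  rw [hkey]
  field_simp
  ring

lemma outer_t {x u : ℝ} (hx : 0 < x) (hu0 : 0 < u) (hu1 : u < 1) :
    ∫ t in Set.Ioo (0:ℝ) 1, Real.sin (π*u)/π * (x/((1-t)*x+t) * (t^(u-1) * (1-t)^(-u)))
      = x^u := by
  rw [MeasureTheory.integral_const_mul, subst_integral hx hu0 hu1]
  have hsin : Real.sin (π*u) ≠ 0 :=
    (Real.sin_pos_of_pos_of_lt_pi (mul_pos Real.pi_pos hu0)
      (by nlinarith [Real.pi_pos])).ne'
  field_simp

set_option maxHeartbeats 1000000 in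
lemma Fmeas (x : ℝ) : Measurable (Function.uncurry (fun u t : ℝ =>
    Real.sin (π*u)/π * (x/((1-t)*x+t) * (t^(u-1) * (1-t)^(-u))))) := by
  show Measurable fun p : ℝ × ℝ =>
    Real.sin (π*p.1)/π * (x/((1-p.2)*x+p.2) * (p.2^(p.1-1) * (1-p.2)^(-p.1)))
  measurability

set_option maxHeartbeats 1000000 in
lemma Fint {x : ℝ} (hx : 0 < x) :
    MeasureTheory.Integrable (Function.uncurry (fun u t : ℝ =>
      Real.sin (π*u)/π * (x/((1-t)*x+t) * (t^(u-1) * (1-t)^(-u)))))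
      ((MeasureTheory.volume.restrict (Set.Ioo (0:ℝ) 1)).prod
        (MeasureTheory.volume.restrict (Set.Ioo (0:ℝ) 1))) := by
  have hFnn : ∀ u ∈ Set.Ioo (0:ℝ) 1, ∀ t ∈ Set.Ioo (0:ℝ) 1,
      0 ≤ Real.sin (π*u)/π * (x/((1-t)*x+t) * (t^(u-1) * (1-t)^(-u))) := by
    rintro u ⟨hu0, hu1⟩ t ⟨ht0, ht1⟩
    have h1 : 0 ≤ Real.sin (π*u) :=
      (Real.sin_pos_of_pos_of_lt_pi (mul_pos Real.pi_pos hu0) (by nlinarith [Real.pi_pos])).le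
    have h2 : (0:ℝ) < (1-t)*x+t := by nlinarith
    exact mul_nonneg (div_nonneg h1 Real.pi_pos.le)
      (mul_nonneg (div_nonneg hx.le h2.le)
        (mul_nonneg (Real.rpow_nonneg ht0.le _) (Real.rpow_nonneg (by linarith) _)))
  rw [MeasureTheory.integrable_prod_iff (Fmeas x).aestronglyMeasurable]
  simp only [Function.uncurry_apply_pair]
  constructor
  · filter_upwards [MeasureTheory.ae_restrict_mem measurableSet_Ioo] with u hu
    exact ((subst_integrableOn hx hu.1 hu.2).const_mul _)
  · have heq : ∀ᵐ u ∂(MeasureTheory.volume.restrict (Set.Ioo (0:ℝ) 1)),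
        (∫ t in Set.Ioo (0:ℝ) 1,
          ‖Real.sin (π*u)/π * (x/((1-t)*x+t) * (t^(u-1) * (1-t)^(-u)))‖) = x^u := by
      filter_upwards [MeasureTheory.ae_restrict_mem measurableSet_Ioo] with u hu
      have h1 : (∫ t in Set.Ioo (0:ℝ) 1,
            ‖Real.sin (π*u)/π * (x/((1-t)*x+t) * (t^(u-1) * (1-t)^(-u)))‖)
          = ∫ t in Set.Ioo (0:ℝ) 1,
            Real.sin (π*u)/π * (x/((1-t)*x+t) * (t^(u-1) * (1-t)^(-u))) := by
        apply MeasureTheory.integral_congr_ae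
        filter_upwards [MeasureTheory.ae_restrict_mem measurableSet_Ioo] with t ht
        rw [Real.norm_eq_abs, abs_of_nonneg (hFnn u hu t ht)]
      rw [h1]
      exact outer_t hx hu.1 hu.2
    have hcont : MeasureTheory.Integrable (fun u : ℝ => x^u)
        (MeasureTheory.volume.restrict (Set.Ioo (0:ℝ) 1)) := by
      have hfe : (fun u : ℝ => x^u) = fun u => Real.exp (Real.log x * u) :=
        funext fun u => Real.rpow_def_of_pos hx u
      rw [hfe]
      exact ((Real.continuous_exp.comp
        (continuous_const.mul continuous_id)).integrableOn_Icc).mono_set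
        Set.Ioo_subset_Icc_self
    exact hcont.congr (heq.mono fun u h => h.symm)

set_option maxHeartbeats 1000000 in
theorem logarithmic_mean_assoc_measure_density (x : ℝ) (hx : 0 < x) :
    (if x = 1 then (1:ℝ) else (x - 1) / Real.log x) =
      ∫ t in (0:ℝ)..1, (x / ((1 - t) * x + t)) *
        (1 / (t * (1 - t) * (π ^ 2 + (Real.log (t / (1 - t))) ^ 2))) := by
  have swap := MeasureTheory.integral_integral_swap (Fint hx)
  have lhs2 : (∫ u in Set.Ioo (0:ℝ) 1, x^u) = ∫ u in Set.Ioo (0:ℝ) 1, ∫ t in Set.Ioo (0:ℝ) 1,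
      Real.sin (π*u)/π * (x/((1-t)*x+t) * (t^(u-1) * (1-t)^(-u))) :=
    MeasureTheory.setIntegral_congr_fun measurableSet_Ioo
      (fun u hu => (outer_t hx hu.1 hu.2).symm)
  have rhs1 : (∫ t in Set.Ioo (0:ℝ) 1, ∫ u in Set.Ioo (0:ℝ) 1,
        Real.sin (π*u)/π * (x/((1-t)*x+t) * (t^(u-1) * (1-t)^(-u))))
      = ∫ t in Set.Ioo (0:ℝ) 1,
          x/((1-t)*x+t) * (1/(t*(1-t)*(π^2 + (Real.log (t/(1-t)))^2))) :=
    MeasureTheory.setIntegral_congr_fun measurableSet_Ioo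
      (fun t ht => inner_u hx ht.1 ht.2)
  rw [← int_rpow_Ioo hx, lhs2]
  rw [intervalIntegral.integral_of_le zero_le_one, MeasureTheory.integral_Ioc_eq_integral_Ioo]
  rw [← rhs1, ← swap]
end

section
/- For every λ ∈ (0,1), ∫_0^1 (sin(λπ)/π) · t^{λ-1}(1-t)^{-λ} dt = 1; equivalently, g(t) = ∫_0^1 (sin(λπ)/π) · t^{λ-1}(1-t)^{-λ} dλ = 1/( t(1-t)(π² + (log(t/(1-t)))²) ) for t ∈ (0,1). -/
open Real

/-- Auxiliary: `∫ l in 0..1, exp (a*l) * sin (π*l) = π * (1 + exp a) / (a^2 + π^2)`. -/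
lemma exp_mul_sin_integral (a : ℝ) :
    (∫ l in (0:ℝ)..1, Real.exp (a * l) * Real.sin (π * l)) =
      π * (1 + Real.exp a) / (a ^ 2 + π ^ 2) := by
  have hD : a ^ 2 + π ^ 2 ≠ 0 := by positivity
  have key : ∀ l ∈ Set.uIcc (0:ℝ) 1,
      HasDerivAt (fun x : ℝ =>
        Real.exp (a * x) * (a * Real.sin (π * x) - π * Real.cos (π * x)) / (a ^ 2 + π ^ 2))
        (Real.exp (a * l) * Real.sin (π * l)) l := by
    intro l _
    have h1 : HasDerivAt (fun x : ℝ => a * x) a l := by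
      simpa using (hasDerivAt_id l).const_mul a
    have h2 : HasDerivAt (fun x : ℝ => π * x) π l := by
      simpa using (hasDerivAt_id l).const_mul π
    have he := h1.exp
    have hs := h2.sin
    have hc := h2.cos
    have := (he.mul ((hs.const_mul a).sub (hc.const_mul π))).div_const (a ^ 2 + π ^ 2)
    convert this using 1
    · rfl
    · rfl
    · rfl
    simp only [Pi.sub_apply]
    rw [eq_div_iff hD]
    ring
  have hcont : Continuous fun l : ℝ => Real.exp (a * l) * Real.sin (π * l) := by
    continuity
  rw [intervalIntegral.integral_eq_sub_of_hasDerivAt key (hcont.intervalIntegrable 0 1)]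
  simp [Real.sin_pi, Real.cos_pi]
  field_simp
  ring

/-- Auxiliary: real Beta reflection integral. -/
lemma beta_reflection {l : ℝ} (hl : l ∈ Set.Ioo (0:ℝ) 1) :
    (∫ t in (0:ℝ)..1, t ^ (l - 1) * (1 - t) ^ (-l)) = π / Real.sin (π * l) := by
  obtain ⟨hl0, hl1⟩ := hl
  have h1 := Complex.Gamma_mul_Gamma_eq_betaIntegral (s := (l : ℂ)) (t := ((1 - l : ℝ) : ℂ))
    (by simpa using hl0) (by simpa using sub_pos.mpr hl1)
  have h2 := Complex.Gamma_mul_Gamma_one_sub (l : ℂ)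
  have hadd : ((l : ℂ) + ((1 - l : ℝ) : ℂ)) = 1 := by push_cast; ring
  have h3 : ((1 : ℂ) - (l : ℂ)) = ((1 - l : ℝ) : ℂ) := by push_cast; ring
  rw [h3] at h2
  rw [hadd, Complex.Gamma_one, one_mul] at h1
  have hbeta : Complex.betaIntegral (l : ℂ) ((1 - l : ℝ) : ℂ)
      = (π : ℂ) / Complex.sin (π * l) := by rw [← h1, h2]
  have hcongr : Complex.betaIntegral (l : ℂ) ((1 - l : ℝ) : ℂ)
      = ((∫ t in (0:ℝ)..1, t ^ (l - 1) * (1 - t) ^ (-l) : ℝ) : ℂ) := by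
    rw [Complex.betaIntegral, ← intervalIntegral.integral_ofReal]
    refine intervalIntegral.integral_congr fun x hx => ?_
    rw [Set.uIcc_of_le (by norm_num : (0:ℝ) ≤ 1)] at hx
    push_cast
    rw [Complex.ofReal_cpow hx.1, Complex.ofReal_cpow (by linarith [hx.2] : (0:ℝ) ≤ 1 - x)]
    push_cast
    ring_nf
  rw [hcongr] at hbeta
  have : ((π : ℂ)) / Complex.sin (π * l) = ((π / Real.sin (π * l) : ℝ) : ℂ) := by
    rw [Complex.ofReal_div]
    norm_cast
  rw [this] at hbeta
  exact_mod_cast hbeta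

theorem geometric_density_normalized_and_integrated :
    (∀ l ∈ Set.Ioo (0:ℝ) 1,
      (∫ t in (0:ℝ)..1, Real.sin (l * π) / π * t ^ (l - 1) * (1 - t) ^ (-l)) = 1) ∧
    (∀ t ∈ Set.Ioo (0:ℝ) 1,
      (∫ l in (0:ℝ)..1, Real.sin (l * π) / π * t ^ (l - 1) * (1 - t) ^ (-l)) =
        1 / (t * (1 - t) * (π ^ 2 + (Real.log (t / (1 - t))) ^ 2))) := by
  constructor
  · intro l hl
    have hsin : Real.sin (l * π) ≠ 0 := by
      have := Real.sin_pos_of_pos_of_lt_pi (mul_pos hl.1 Real.pi_pos)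
        (by nlinarith [Real.pi_pos, hl.2] : l * π < π)
      exact this.ne'
    simp_rw [mul_assoc, intervalIntegral.integral_const_mul]
    rw [beta_reflection hl, mul_comm π l]
    field_simp
  · intro t ht
    obtain ⟨ht0, ht1⟩ := ht
    have h1t : (0:ℝ) < 1 - t := by linarith
    set a : ℝ := Real.log t - Real.log (1 - t) with ha
    have hcongr : ∀ l : ℝ,
        Real.sin (l * π) / π * t ^ (l - 1) * (1 - t) ^ (-l)
          = 1 / (π * t) * (Real.exp (a * l) * Real.sin (π * l)) := by
      intro l
      rw [Real.rpow_def_of_pos ht0, Real.rpow_def_of_pos h1t, mul_assoc, ← Real.exp_add]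
      have : Real.log t * (l - 1) + Real.log (1 - t) * (-l) = a * l + (- Real.log t) := by
        rw [ha]; ring
      rw [this, Real.exp_add, Real.exp_neg, Real.exp_log ht0, mul_comm l π]
      field_simp
    simp_rw [hcongr]
    rw [intervalIntegral.integral_const_mul, exp_mul_sin_integral]
    have hexpa : Real.exp a = t / (1 - t) := by
      rw [ha, Real.exp_sub, Real.exp_log ht0, Real.exp_log h1t]
    have hlog : Real.log (t / (1 - t)) = a := by
      rw [ha, Real.log_div ht0.ne' h1t.ne']
    rw [hexpa, hlog]
    have hD : a ^ 2 + π ^ 2 ≠ 0 := by positivity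
    have hπ := Real.pi_ne_zero
    field_simp
    ring
end

section
/- A finite Borel measure μ on [0,1] satisfies ∫ x/((1-t)x+t) dμ(t) = x · ∫ (1/x)/((1-t)(1/x)+t) dμ(t) for all x > 0 (i.e., the represented function f satisfies f(x) = x f(1/x), so the corresponding connection is symmetric) if and only if μ is invariant under t ↦ 1-t. -/
open MeasureTheory
open scoped NNReal ENNReal

def Theta : Set.Icc (0:ℝ) 1 → Set.Icc (0:ℝ) 1 :=
  fun t => ⟨1 - (t:ℝ), ⟨by linarith [t.2.2], by linarith [t.2.1]⟩⟩

namespace SymmConnAux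

open Set

abbrev Om := Set.Icc (0:ℝ) 1

lemma theta_continuous : Continuous Theta := by
  apply Continuous.subtype_mk
  fun_prop

lemma theta_measurable : Measurable Theta := theta_continuous.measurable

lemma cont_int (ρ : Measure Om) [IsFiniteMeasure ρ] {f : Om → ℝ} (hf : Continuous f) :
    Integrable f ρ :=
  (BoundedContinuousFunction.mkOfCompact ⟨f, hf⟩).integrable ρ

lemma den_pos {x : ℝ} (hx : 0 < x) (t : Om) : 0 < (1 - (t:ℝ)) * x + t := by
  rcases lt_or_eq_of_le t.2.1 with h | h
  · have : 0 ≤ (1 - (t:ℝ)) * x := mul_nonneg (by linarith [t.2.2]) hx.le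
    linarith
  · rw [← h]; simpa using hx

/-- The uniqueness-of-power-series-coefficients lemma. -/
lemma tsum_coeff_zero (c : ℕ → ℝ) (M : ℝ) (hM : ∀ n, |c n| ≤ M)
    (h : ∀ y : ℝ, y ∈ Set.Ioo (0:ℝ) (1/2) → ∑' n, c n * y ^ n = 0) :
    ∀ n, c n = 0 := by
  have hM0 : 0 ≤ M := le_trans (abs_nonneg _) (hM 0)
  have hsum : ∀ (m : ℕ) (y : ℝ), y ∈ Set.Ioo (0:ℝ) (1/2) →
      Summable (fun j => c (m+j) * y ^ j) := by
    intro m y hy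
    apply Summable.of_norm_bounded
      ((summable_geometric_of_lt_one (le_of_lt hy.1) (by linarith [hy.2])).mul_left M)
    intro j
    rw [norm_mul, norm_pow, Real.norm_eq_abs, Real.norm_eq_abs, abs_of_pos hy.1]
    exact mul_le_mul_of_nonneg_right (hM _) (pow_nonneg (le_of_lt hy.1) j)
  have tail_bound : ∀ (m:ℕ) (y:ℝ), y ∈ Set.Ioo (0:ℝ) (1/2) →
      |∑' j, c (m+j) * y^j| ≤ 2*M := by
    intro m y hy
    have h1 : ‖∑' j, c (m+j) * y^j‖ ≤ ∑' j, ‖c (m+j) * y^j‖ :=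
      norm_tsum_le_tsum_norm (hsum m y hy).norm
    have h2 : ∑' j, ‖c (m+j) * y^j‖ ≤ ∑' j, M * y^j := by
      apply Summable.tsum_le_tsum _ (hsum m y hy).norm
        ((summable_geometric_of_lt_one (le_of_lt hy.1) (by linarith [hy.2])).mul_left M)
      intro j
      rw [norm_mul, norm_pow, Real.norm_eq_abs, Real.norm_eq_abs, abs_of_pos hy.1]
      exact mul_le_mul_of_nonneg_right (hM _) (pow_nonneg (le_of_lt hy.1) j)
    have h3 : ∑' j : ℕ, M * y^j = M * (1-y)⁻¹ := by
      rw [tsum_mul_left, tsum_geometric_of_lt_one (le_of_lt hy.1) (by linarith [hy.2])]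
    have h4 : M * (1-y)⁻¹ ≤ 2*M := by
      have : (1-y)⁻¹ ≤ 2 := by
        rw [inv_le_comm₀ (by linarith [hy.2]) (by norm_num)]
        linarith [hy.2]
      nlinarith
    calc |∑' j, c (m+j) * y^j| ≤ ∑' j, ‖c (m+j) * y^j‖ := h1
      _ ≤ ∑' j, M * y^j := h2
      _ ≤ 2*M := by rw [h3]; exact h4
  have key : ∀ m, (∀ y ∈ Set.Ioo (0:ℝ) (1/2), ∑' j, c (m+j)*y^j = 0) →
      c m = 0 ∧ (∀ y ∈ Set.Ioo (0:ℝ) (1/2), ∑' j, c (m+1+j)*y^j = 0) := by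
    intro m hm
    have step : ∀ y ∈ Set.Ioo (0:ℝ) (1/2), c m + y * ∑' j, c (m+1+j)*y^j = 0 := by
      intro y hy
      have e0 := (hsum m y hy).tsum_eq_zero_add
      have e1 : (fun j => c (m+(j+1)) * y^(j+1)) = fun j => y * (c (m+1+j) * y^j) := by
        funext j
        have : m + (j+1) = m+1+j := by omega
        rw [this, pow_succ]; ring
      rw [hm y hy] at e0
      rw [e1, tsum_mul_left] at e0
      simp only [pow_zero, mul_one, add_zero] at e0
      linarith [e0]
    have hc : c m = 0 := by
      have hb : ∀ y ∈ Set.Ioo (0:ℝ) (1/2), |c m| ≤ 2*M*y := by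
        intro y hy
        have hs := step y hy
        have : c m = -(y * ∑' j, c (m+1+j)*y^j) := by linarith
        rw [this, abs_neg, abs_mul, abs_of_pos hy.1]
        calc y * |∑' j, c (m+1+j)*y^j| ≤ y * (2*M) :=
              mul_le_mul_of_nonneg_left (tail_bound (m+1) y hy) (le_of_lt hy.1)
          _ = 2*M*y := by ring
      have hle : ∀ ε > (0:ℝ), |c m| ≤ 0 + ε := by
        intro ε hε
        set y := min (ε/(2*M+1)) (1/4) with hy
        have hy1 : 0 < y := lt_min (by positivity) (by norm_num)
        have hy2 : y < 1/2 := lt_of_le_of_lt (min_le_right _ _) (by norm_num)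
        have := hb y ⟨hy1, hy2⟩
        have h5 : 2*M*y ≤ 2*M*(ε/(2*M+1)) :=
          mul_le_mul_of_nonneg_left (min_le_left _ _) (by linarith)
        have h6 : 2*M*(ε/(2*M+1)) ≤ ε := by
          rw [← mul_div_assoc, div_le_iff₀ (by linarith : (0:ℝ) < 2*M+1)]
          nlinarith
        linarith
      have := le_of_forall_pos_le_add hle
      have := abs_nonneg (c m)
      have : |c m| = 0 := by linarith
      exact abs_eq_zero.mp this
    refine ⟨hc, fun y hy => ?_⟩
    have hs := step y hy
    rw [hc, zero_add] at hs
    rcases mul_eq_zero.mp hs with h' | h'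
    · exact absurd h' (ne_of_gt hy.1)
    · exact h'
  have main : ∀ m, ∀ y ∈ Set.Ioo (0:ℝ) (1/2), ∑' j, c (m+j) * y^j = 0 := by
    intro m
    induction m with
    | zero => intro y hy; simpa using h y hy
    | succ n ih => exact (key n ih).2
  intro n
  exact (key n (main n)).1

lemma hasSum_mom (ρ : Measure Om) [IsFiniteMeasure ρ] (u : ℝ) (hu : |u| < 1) :
    HasSum (fun n => (-u)^n * ∫ t : Om, ((t:ℝ))^n ∂ρ) (∫ t : Om, (1+u*(t:ℝ))⁻¹ ∂ρ) := by
  have hcont : ∀ n : ℕ, Continuous (fun t : Om => (-(u*(t:ℝ)))^n) := by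
    intro n; fun_prop
  have hint : ∀ n : ℕ, Integrable (fun t : Om => (-(u*(t:ℝ)))^n) ρ :=
    fun n => cont_int ρ (hcont n)
  have hbd : ∀ (n : ℕ) (t : Om), ‖(-(u*(t:ℝ)))^n‖ ≤ |u|^n := by
    intro n t
    rw [norm_pow, Real.norm_eq_abs, abs_neg, abs_mul]
    apply pow_le_pow_left₀ (by positivity)
    calc |u| * |(t:ℝ)| ≤ |u| * 1 := by
          apply mul_le_mul_of_nonneg_left _ (abs_nonneg u)
          rw [abs_of_nonneg t.2.1]; exact t.2.2
      _ = |u| := mul_one _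
  have hsumnorm : Summable (fun n => ∫ t : Om, ‖(-(u*(t:ℝ)))^n‖ ∂ρ) := by
    apply Summable.of_nonneg_of_le
      (fun n => integral_nonneg (fun t => norm_nonneg _))
      (fun n => ?_)
      (((summable_geometric_of_lt_one (abs_nonneg u) hu)).mul_left ((ρ Set.univ).toReal))
    calc ∫ t : Om, ‖(-(u*(t:ℝ)))^n‖ ∂ρ ≤ ∫ _t : Om, |u|^n ∂ρ := by
          apply integral_mono ((hint n).norm) (integrable_const _) (hbd n)
      _ = (ρ Set.univ).toReal * |u|^n := by rw [integral_const, smul_eq_mul, measureReal_def]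
  have hs := hasSum_integral_of_summable_integral_norm (F := fun n (t : Om) => (-(u*(t:ℝ)))^n)
    hint hsumnorm
  have e1 : ∀ t : Om, ∑' n, (-(u*(t:ℝ)))^n = (1+u*(t:ℝ))⁻¹ := by
    intro t
    rw [tsum_geometric_of_abs_lt_one]
    · ring_nf
    · rw [abs_neg]
      calc |u*(t:ℝ)| ≤ |u| := by
            rw [abs_mul]
            calc |u| * |(t:ℝ)| ≤ |u| * 1 := by
                  apply mul_le_mul_of_nonneg_left _ (abs_nonneg u)
                  rw [abs_of_nonneg t.2.1]; exact t.2.2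
              _ = |u| := mul_one _
        _ < 1 := hu
  have e2 : ∀ n : ℕ, (∫ t : Om, (-(u*(t:ℝ)))^n ∂ρ) = (-u)^n * ∫ t : Om, ((t:ℝ))^n ∂ρ := by
    intro n
    rw [← integral_const_mul]
    congr 1; funext t; rw [← mul_pow]; ring_nf
  simp_rw [e2, e1] at hs
  exact hs

lemma moment_bound (ρ : Measure Om) [IsFiniteMeasure ρ] (n : ℕ) :
    |∫ t : Om, ((t:ℝ))^n ∂ρ| ≤ (ρ Set.univ).toReal := by
  have := norm_integral_le_of_norm_le_const (μ := ρ) (f := fun t : Om => ((t:ℝ))^n) (C := 1)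
    (Filter.Eventually.of_forall (fun t => by
      rw [Real.norm_eq_abs, abs_of_nonneg (pow_nonneg t.2.1 n)]
      exact pow_le_one₀ t.2.1 t.2.2))
  simpa [← measureReal_def] using this

end SymmConnAux

open SymmConnAux

theorem symmetric_connection_iff_symmetric_measure
    (μ : Measure (Set.Icc (0:ℝ) 1)) [IsFiniteMeasure μ] :
    (∀ x : ℝ, 0 < x →
      (∫ t : Set.Icc (0:ℝ) 1, x / ((1 - (t:ℝ)) * x + t) ∂μ) =
        x * ∫ t : Set.Icc (0:ℝ) 1, (1 / x) / ((1 - (t:ℝ)) * (1 / x) + t) ∂μ) ↔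
    μ.map Theta = μ := by
  haveI : IsFiniteMeasure (μ.map Theta) := by
    constructor
    rw [Measure.map_apply theta_measurable MeasurableSet.univ]
    exact measure_lt_top μ _
  -- Rewrite the RHS of the connection condition
  have cond_iff : ∀ x : ℝ, 0 < x →
      (x * ∫ t : Om, (1 / x) / ((1 - (t:ℝ)) * (1 / x) + t) ∂μ
        = ∫ t : Om, x / ((1 - (t:ℝ)) * x + t) ∂(μ.map Theta)) := by
    intro x hx
    rw [← integral_const_mul]
    rw [integral_map theta_measurable.aemeasurable
      (Continuous.aestronglyMeasurable (by
        apply Continuous.div continuous_const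
        · fun_prop
        · intro t; exact ne_of_gt (den_pos hx t)))]
    congr 1
    funext t
    show x * ((1/x) / ((1 - (t:ℝ)) * (1/x) + t)) = x / ((1 - ((Theta t : Om) : ℝ)) * x + ((Theta t : Om) : ℝ))
    have hTh : ((Theta t : Om) : ℝ) = 1 - (t:ℝ) := rfl
    rw [hTh]
    have h1 : (0:ℝ) < (1 - (t:ℝ)) * (1/x) + t := den_pos (by positivity) t
    have h2 : (0:ℝ) < (1 - (1 - (t:ℝ))) * x + (1 - (t:ℝ)) := den_pos hx (Theta t)
    have h2' : (1 - (1 - (t:ℝ))) * x + (1 - (t:ℝ)) = (t:ℝ) * x + (1 - t) := by ring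
    field_simp
    ring
  constructor
  · -- hard direction
    intro H
    set ν := μ.map Theta with hν
    have A : ∀ x : ℝ, 0 < x →
        (∫ t : Om, x / ((1 - (t:ℝ)) * x + t) ∂μ) = ∫ t : Om, x / ((1 - (t:ℝ)) * x + t) ∂ν := by
      intro x hx
      rw [H x hx, cond_iff x hx]
    -- moments are equal
    set c : ℕ → ℝ := fun n => (∫ t : Om, ((t:ℝ))^n ∂μ) - (∫ t : Om, ((t:ℝ))^n ∂ν) with hc
    have hcz : ∀ y : ℝ, y ∈ Set.Ioo (0:ℝ) (1/2) → ∑' n, c n * y ^ n = 0 := by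
      intro y hy
      set u := -y with hu
      have hu1 : |u| < 1 := by
        rw [hu, abs_neg, abs_of_pos hy.1]; linarith [hy.2]
      have hx : (0:ℝ) < (1+u)⁻¹ := by
        rw [hu]; have : (0:ℝ) < 1 - y := by linarith [hy.2]
        simpa using inv_pos.mpr this
      have pt : ∀ t : Om, (1+u)⁻¹ / ((1 - (t:ℝ)) * (1+u)⁻¹ + t) = (1+u*(t:ℝ))⁻¹ := by
        intro t
        have h1 : (0:ℝ) < (1 - (t:ℝ)) * (1+u)⁻¹ + t := den_pos hx t
        have h2 : (0:ℝ) < 1 + u := by rw [hu]; linarith [hy.2]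
        have h3 : (0:ℝ) < 1 + u * t := by
          rw [hu]
          have := t.2.1; have := t.2.2
          nlinarith [hy.1, hy.2]
        have hden : (1 - (t:ℝ))*(1+u)⁻¹ + (t:ℝ) = (1+u*(t:ℝ)) * (1+u)⁻¹ := by
          field_simp
          ring
        rw [hden, div_mul_eq_div_div_swap, div_self (inv_ne_zero h2.ne'), one_div]
      have hint : (∫ t : Om, (1+u*(t:ℝ))⁻¹ ∂μ) = ∫ t : Om, (1+u*(t:ℝ))⁻¹ ∂ν := by
        have := A ((1+u)⁻¹) hx
        simp_rw [pt] at this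
        exact this
      have hμs := hasSum_mom μ u hu1
      have hνs := hasSum_mom ν u hu1
      rw [hint] at hμs
      have hdiff := hμs.sub hνs
      rw [sub_self] at hdiff
      have e : (fun n => (-u)^n * (∫ t : Om, ((t:ℝ))^n ∂μ)
          - (-u)^n * (∫ t : Om, ((t:ℝ))^n ∂ν)) = fun n => c n * y ^ n := by
        funext n
        rw [hc]
        have : -u = y := by rw [hu]; ring
        rw [← this]
        ring
      rw [e] at hdiff
      exact hdiff.tsum_eq
    have hMb : ∀ n, |c n| ≤ (μ Set.univ).toReal + (ν Set.univ).toReal := by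
      intro n
      rw [hc]
      calc |(∫ t : Om, ((t:ℝ))^n ∂μ) - (∫ t : Om, ((t:ℝ))^n ∂ν)|
          ≤ |∫ t : Om, ((t:ℝ))^n ∂μ| + |∫ t : Om, ((t:ℝ))^n ∂ν| := abs_sub _ _
        _ ≤ (μ Set.univ).toReal + (ν Set.univ).toReal :=
            add_le_add (moment_bound μ n) (moment_bound ν n)
    have moments : ∀ n : ℕ, (∫ t : Om, ((t:ℝ))^n ∂μ) = ∫ t : Om, ((t:ℝ))^n ∂ν := by
      intro n
      have h0 : c n = 0 := tsum_coeff_zero c _ hMb hcz n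
      exact sub_eq_zero.mp h0
    -- polynomials
    have polyint : ∀ p : Polynomial ℝ,
        (∫ t : Om, p.eval (t:ℝ) ∂μ) = ∫ t : Om, p.eval (t:ℝ) ∂ν := by
      intro p
      have e : ∀ (ρ : Measure Om) [IsFiniteMeasure ρ], (∫ t : Om, p.eval (t:ℝ) ∂ρ)
          = ∑ i ∈ Finset.range (p.natDegree + 1), p.coeff i * ∫ t : Om, ((t:ℝ))^i ∂ρ := by
        intro ρ _
        calc (∫ t : Om, p.eval (t:ℝ) ∂ρ)
            = ∫ t : Om, (∑ i ∈ Finset.range (p.natDegree + 1), p.coeff i * ((t:ℝ))^i) ∂ρ := by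
              congr 1; funext t; rw [Polynomial.eval_eq_sum_range]
          _ = ∑ i ∈ Finset.range (p.natDegree + 1), ∫ t : Om, p.coeff i * ((t:ℝ))^i ∂ρ := by
              apply integral_finset_sum
              intro i _
              exact cont_int ρ (by fun_prop)
          _ = ∑ i ∈ Finset.range (p.natDegree + 1), p.coeff i * ∫ t : Om, ((t:ℝ))^i ∂ρ := by
              apply Finset.sum_congr rfl
              intro i _
              exact integral_const_mul _ _
      rw [e μ, e ν]
      apply Finset.sum_congr rfl
      intro i _
      rw [moments i]
    -- continuous functions
    have contint : ∀ f : C(Om, ℝ), (∫ t : Om, f t ∂μ) = ∫ t : Om, f t ∂ν := by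
      intro f
      set K := (μ Set.univ).toReal + (ν Set.univ).toReal with hK
      have hK0 : 0 ≤ K := by positivity
      have hle : ∀ ε > (0:ℝ), |(∫ t : Om, f t ∂μ) - ∫ t : Om, f t ∂ν| ≤ 0 + ε := by
        intro ε hε
        obtain ⟨p, hp⟩ := exists_polynomial_near_continuousMap 0 1 f (ε/(K+1)) (by positivity)
        have hbd : ∀ t : Om, ‖f t - p.eval (t:ℝ)‖ ≤ ε/(K+1) := by
          intro t
          have h1 := ContinuousMap.norm_coe_le_norm (p.toContinuousMapOn (Set.Icc (0:ℝ) 1) - f) t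
          have h2 : ((p.toContinuousMapOn (Set.Icc (0:ℝ) 1) - f) t) = p.eval (t:ℝ) - f t := by
            simp [Polynomial.toContinuousMapOn_apply]
          rw [h2] at h1
          rw [← norm_neg]
          simp only [neg_sub]
          exact le_trans h1 (le_of_lt hp)
        have hintf : Integrable (fun t : Om => f t) μ := cont_int μ f.continuous
        have hintf' : Integrable (fun t : Om => f t) ν := cont_int ν f.continuous
        have hintp : Integrable (fun t : Om => p.eval (t:ℝ)) μ := cont_int μ (by fun_prop)
        have hintp' : Integrable (fun t : Om => p.eval (t:ℝ)) ν := cont_int ν (by fun_prop)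
        have d1 : ‖∫ t : Om, (f t - p.eval (t:ℝ)) ∂μ‖ ≤ ε/(K+1) * (μ Set.univ).toReal :=
          norm_integral_le_of_norm_le_const (Filter.Eventually.of_forall hbd)
        have d2 : ‖∫ t : Om, (f t - p.eval (t:ℝ)) ∂ν‖ ≤ ε/(K+1) * (ν Set.univ).toReal :=
          norm_integral_le_of_norm_le_const (Filter.Eventually.of_forall hbd)
        rw [integral_sub hintf hintp] at d1
        rw [integral_sub hintf' hintp'] at d2
        have keyeq : (∫ t : Om, f t ∂μ) - ∫ t : Om, f t ∂ν
            = ((∫ t : Om, f t ∂μ) - ∫ t : Om, p.eval (t:ℝ) ∂μ)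
              - ((∫ t : Om, f t ∂ν) - ∫ t : Om, p.eval (t:ℝ) ∂ν) := by
          rw [polyint p]; ring
        rw [keyeq]
        calc |((∫ t : Om, f t ∂μ) - ∫ t : Om, p.eval (t:ℝ) ∂μ)
              - ((∫ t : Om, f t ∂ν) - ∫ t : Om, p.eval (t:ℝ) ∂ν)|
            ≤ |(∫ t : Om, f t ∂μ) - ∫ t : Om, p.eval (t:ℝ) ∂μ|
              + |(∫ t : Om, f t ∂ν) - ∫ t : Om, p.eval (t:ℝ) ∂ν| := abs_sub _ _
          _ ≤ ε/(K+1) * (μ Set.univ).toReal + ε/(K+1) * (ν Set.univ).toReal := by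
              exact add_le_add d1 d2
          _ = ε/(K+1) * K := by rw [hK]; ring
          _ ≤ 0 + ε := by
              rw [zero_add, div_mul_eq_mul_div, div_le_iff₀ (by linarith : (0:ℝ) < K+1)]
              nlinarith
      have h0 := le_of_forall_pos_le_add hle
      have := abs_nonneg ((∫ t : Om, f t ∂μ) - ∫ t : Om, f t ∂ν)
      have : |(∫ t : Om, f t ∂μ) - ∫ t : Om, f t ∂ν| = 0 := by linarith
      have := abs_eq_zero.mp this
      linarith [this]
    -- conclude via bounded continuous ℝ≥0-valued functions
    apply ext_of_forall_lintegral_eq_of_IsFiniteMeasure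
    intro f
    have hfc : Continuous (fun t : Om => ((f t : ℝ≥0) : ℝ)) :=
      NNReal.continuous_coe.comp f.continuous
    have h1 := BoundedContinuousFunction.toReal_lintegral_coe_eq_integral f ν
    have h2 := BoundedContinuousFunction.toReal_lintegral_coe_eq_integral f μ
    have h3 := contint ⟨fun t => ((f t : ℝ≥0) : ℝ), hfc⟩
    have hfin1 : (∫⁻ t, ((f t : ℝ≥0) : ℝ≥0∞) ∂ν) ≠ ⊤ :=
      (BoundedContinuousFunction.lintegral_lt_top_of_nnreal ν f).ne
    have hfin2 : (∫⁻ t, ((f t : ℝ≥0) : ℝ≥0∞) ∂μ) ≠ ⊤ :=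
      (BoundedContinuousFunction.lintegral_lt_top_of_nnreal μ f).ne
    rw [← ENNReal.toReal_eq_toReal_iff' hfin1 hfin2, h1, h2]
    exact (h3).symm
  · -- easy direction
    intro H x hx
    rw [cond_iff x hx, H]
end
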